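/- Let L be a line bundle of degree d ≥ 2g+3 on a projective integral curve C of arithmetic genus g, defining a linearly normal embedding C₀ ⊂ P^{d−g}, and let p₁, p₂ be distinct smooth points of C. Let S₁ = Join(p₁, C₀), S₂ = Join(p₂, C₀), and T = Join(L̄, C₀) where L̄ is the line through p₁, p₂. Then I(S₁)₂ ∩ I(S₂)₂ = I(T)₂, i.e., a quadric containing both cones S₁ and S₂ contains the join T. -/

import Mathlib

open MvPolynomial Matrix Module

/-- The symmetric matrix associated to a quadratic form written as a polynomial
(characteristic ≠ 2). -/
noncomputable def quadMatrix {k : Type*} [Field k] {n : ℕ}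
    (Q : MvPolynomial (Fin n) k) : Matrix (Fin n) (Fin n) k :=
  fun i j => if i = j then MvPolynomial.coeff (Finsupp.single i 2) Q
    else MvPolynomial.coeff (Finsupp.single i 1 + Finsupp.single j 1) Q / 2

/-- An ideal is generated by quadrics of rank at most 3. -/
def GenByRank3Quadrics {k : Type*} [Field k] {n : ℕ}
    (I : Ideal (MvPolynomial (Fin n) k)) : Prop :=
  ∃ S : Set (MvPolynomial (Fin n) k),
    (∀ Q ∈ S, Q.IsHomogeneous 2 ∧ (quadMatrix Q).rank ≤ 3) ∧ Ideal.span S = I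

/-- The Hilbert function of the homogeneous coordinate ring `k[x]/I`. -/
noncomputable def hilbFn {k : Type*} [Field k] {n : ℕ}
    (I : Ideal (MvPolynomial (Fin n) k)) (m : ℕ) : ℕ :=
  Module.finrank k ((MvPolynomial.homogeneousSubmodule (Fin n) k m).map
    (Ideal.Quotient.mkₐ k I).toLinearMap)

/-- Extrinsic description (via the affine cone `X ⊆ k^{r+1}`) of a projectively normal
integral curve of degree `d` and arithmetic genus `g`, linearly normally embedded in
`ℙ^r` by a complete linear system (`r = d - g`); degree and genus are encoded by the
Hilbert function `m ↦ d·m + 1 - g` of the homogeneous coordinate ring. -/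
structure IsPNCurve {k : Type*} [Field k] {r : ℕ} (X : Set (Fin (r + 1) → k))
    (d g : ℕ) : Prop where
  cone : ∀ (c : k), ∀ x ∈ X, c • x ∈ X
  zero_mem : (0 : Fin (r + 1) → k) ∈ X
  closed : X = MvPolynomial.zeroLocus k (MvPolynomial.vanishingIdeal k X)
  integral : (MvPolynomial.vanishingIdeal k X).IsPrime
  hilb : ∀ m : ℕ, 1 ≤ m → (hilbFn (MvPolynomial.vanishingIdeal k X) m : ℤ) = d * m + 1 - g

/-- `v` is (the affine cone representative of) a smooth point of the curve with affine
cone `X ⊆ k^n`: the gradients at `v` of the polynomials vanishing on `X` span a space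
of dimension `n − 2` (the codimension of the 2-dimensional cone). -/
def IsSmoothCurvePoint {k : Type*} [Field k] {n : ℕ} (X : Set (Fin n → k))
    (v : Fin n → k) : Prop :=
  v ∈ X ∧ v ≠ 0 ∧
    Module.finrank k ↥(Submodule.span k
      {w : Fin n → k | ∃ P ∈ MvPolynomial.vanishingIdeal k X,
        w = fun i => MvPolynomial.eval v (MvPolynomial.pderiv i P)}) = n - 2

private lemma finsupp_degree_two {n : ℕ} (e : Fin n →₀ ℕ) (he : e.degree = 2) :
    ∃ i j, e = Finsupp.single i 1 + Finsupp.single j 1 := by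
  have hcard : Multiset.card (Finsupp.toMultiset e) = 2 := by
    rw [Finsupp.card_toMultiset]
    exact he
  obtain ⟨i, j, hij⟩ := Multiset.card_eq_two.mp hcard
  refine ⟨i, j, ?_⟩
  have h2 : Multiset.toFinsupp ({i} + {j}) = e :=
    Multiset.toFinsupp_eq_iff.mpr (by rw [hij, Multiset.singleton_add]; simp)
  rw [← h2, Multiset.toFinsupp_add, Multiset.toFinsupp_singleton, Multiset.toFinsupp_singleton]

private lemma quad_identity {k : Type*} [CommRing k] {n : ℕ}
    (Q : MvPolynomial (Fin n) k) (hQ : Q.IsHomogeneous 2)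
    (x y z : Fin n → k) :
    eval (x + y + z) Q + eval x Q + eval y Q + eval z Q
      = eval (x + y) Q + eval (x + z) Q + eval (y + z) Q := by
  conv_lhs => rw [Q.as_sum]
  conv_rhs => rw [Q.as_sum]
  simp only [map_sum, ← Finset.sum_add_distrib]
  refine Finset.sum_congr rfl fun e he => ?_
  have hdeg : e.degree = 2 := by
    have := hQ (MvPolynomial.mem_support_iff.mp he)
    rwa [Finsupp.degree_eq_weight_one]
  obtain ⟨i, j, rfl⟩ := finsupp_degree_two e hdeg
  simp only [eval_monomial,
    Finsupp.prod_add_index (fun a _ => pow_zero _) (fun a _ m₁ m₂ => pow_add _ m₁ m₂),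
    Pi.add_apply]
  have hps : ∀ (w : Fin n → k) (a : Fin n),
      (Finsupp.single a (1 : ℕ)).prod (fun c m => w c ^ m) = w a :=
    fun w a => by rw [Finsupp.prod_single_index (h := fun c m => w c ^ m) (pow_zero _), pow_one]
  simp only [hps]
  ring

/-- Let `C₀ ⊆ ℙ^{d−g}` be a linearly normally embedded projectively normal integral
curve of degree `d ≥ 2g + 3` and arithmetic genus `g`, and let `p₁ ≠ p₂` be smooth
points of `C₀` (with affine cone representatives `v₁, v₂`). With
`S₁ = Join(p₁, C₀)`, `S₂ = Join(p₂, C₀)` and `T = Join(L̄, C₀)` for the line `L̄`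
through `p₁, p₂` (all given by their affine cones), one has
`I(S₁)₂ ∩ I(S₂)₂ = I(T)₂`. -/
theorem stmt_11 (k : Type*) [Field k] [IsAlgClosed k] (hchar : ringChar k ≠ 2)
    (d g : ℕ) (hd : 2 * g + 3 ≤ d)
    (X : Set (Fin (d - g + 1) → k)) (hX : IsPNCurve X d g)
    (v₁ v₂ : Fin (d - g + 1) → k)
    (hv₁ : IsSmoothCurvePoint X v₁) (hv₂ : IsSmoothCurvePoint X v₂)
    (hne : ∀ c : k, v₂ ≠ c • v₁) :
    (MvPolynomial.homogeneousSubmodule (Fin (d - g + 1)) k 2 ⊓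
        Submodule.restrictScalars k (MvPolynomial.vanishingIdeal k
          {w | ∃ a : k, ∃ y ∈ X, w = a • v₁ + y}) ⊓
        Submodule.restrictScalars k (MvPolynomial.vanishingIdeal k
          {w | ∃ a : k, ∃ y ∈ X, w = a • v₂ + y}))
      = (MvPolynomial.homogeneousSubmodule (Fin (d - g + 1)) k 2 ⊓
          Submodule.restrictScalars k (MvPolynomial.vanishingIdeal k
            {w | ∃ a b : k, ∃ y ∈ X, w = a • v₁ + b • v₂ + y})) := by
  apply le_antisymm
  · intro Q hQ
    simp only [Submodule.mem_inf, Submodule.restrictScalars_mem,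
      MvPolynomial.mem_vanishingIdeal_iff, MvPolynomial.mem_homogeneousSubmodule] at hQ ⊢
    obtain ⟨⟨hhom, hS1⟩, hS2⟩ := hQ
    refine ⟨hhom, ?_⟩
    rintro w ⟨a, b, y, hy, rfl⟩
    have h0 : (0 : Fin (d - g + 1) → k) ∈ X := hX.zero_mem
    have e1 : ∀ (c : k), ∀ y ∈ X, eval (c • v₁ + y) Q = 0 :=
      fun c y hy => hS1 _ ⟨c, y, hy, rfl⟩
    have e2 : ∀ (c : k), ∀ y ∈ X, eval (c • v₂ + y) Q = 0 :=
      fun c y hy => hS2 _ ⟨c, y, hy, rfl⟩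
    have key := quad_identity Q hhom (a • v₁) (b • v₂) y
    have t1 : eval (a • v₁ + b • v₂) Q = 0 := e1 a _ (hX.cone b v₂ hv₂.1)
    have t2 : eval (a • v₁ + y) Q = 0 := e1 a y hy
    have t3 : eval (b • v₂ + y) Q = 0 := e2 b y hy
    have t4 : eval (a • v₁) Q = 0 := by simpa using e1 a 0 h0
    have t5 : eval (b • v₂) Q = 0 := by simpa using e2 b 0 h0
    have t6 : eval y Q = 0 := by simpa using e1 0 y hy
    rw [t1, t2, t3, t4, t5, t6] at key
    simpa using key
  · intro Q hQ
    simp only [Submodule.mem_inf, Submodule.restrictScalars_mem,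
      MvPolynomial.mem_vanishingIdeal_iff, MvPolynomial.mem_homogeneousSubmodule] at hQ ⊢
    obtain ⟨hhom, hT⟩ := hQ
    refine ⟨⟨hhom, ?_⟩, ?_⟩
    · rintro w ⟨a, y, hy, rfl⟩
      exact hT _ ⟨a, 0, y, hy, by simp⟩
    · rintro w ⟨a, y, hy, rfl⟩
      exact hT _ ⟨0, a, y, hy, by simp⟩
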